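/- Let $\mathcal{T}$ be a triangulated category, $\mathcal{S}$ a class of objects, and $E, F$ objects with $\mathrm{level}^{\mathcal{S}}(E) \leq m$ and $\mathrm{level}^{E}(F) \leq n$. Then $\mathrm{level}^{\mathcal{S}}(F) \leq mn$, i.e., the level is submultiplicative under composition of building: if $E \in \langle \mathcal{S} \rangle_m$ and $F \in \langle E \rangle_n$ then $F \in \langle \mathcal{S} \rangle_{mn}$. -/

import Mathlib

/-!
Preamble: level filtration in a triangulated category.
level filtration `⟨S⟩_n` equals the smallest thick subcategory containing `S`.
-/

open CategoryTheory CategoryTheory.Limits CategoryTheory.Pretriangulated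

universe v u

variable {C : Type u} [Category.{v} C] [Preadditive C] [HasZeroObject C] [HasShift C ℤ]
  [∀ n : ℤ, (CategoryTheory.shiftFunctor C n).Additive] [Pretriangulated C]

/-- `AddClos S` is the closure of `S` under shifts, finite coproducts and direct summands
(in particular it is closed under isomorphisms, since an isomorphism is a retract). -/
inductive AddClos (S : Set C) : C → Prop
  | of {X : C} (hX : X ∈ S) : AddClos S X
  | zero {X : C} (hX : IsZero X) : AddClos S X
  | shift {X : C} (n : ℤ) (hX : AddClos S X) : AddClos S (X⟦n⟧)
  | sum {X Y : C} (hX : AddClos S X) (hY : AddClos S Y) : AddClos S (X ⊞ Y)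
  | retract {X Y : C} (hY : AddClos S Y) (i : X ⟶ Y) (p : Y ⟶ X) (hip : i ≫ p = 𝟙 X) :
      AddClos S X

/-- The level filtration: `level S 0` consists of the zero objects, `level S 1 = add S`, and
`level S (n+1)` consists of `add` of the cones of morphisms from `level S n` to `level S 1`. -/
def level (S : Set C) : ℕ → Set C
  | 0 => {X | IsZero X}
  | 1 => {X | AddClos S X}
  | (n + 2) => {Z | AddClos {W | ∃ (X Y : C) (f : X ⟶ Y) (g : Y ⟶ W) (h : W ⟶ X⟦(1 : ℤ)⟧),
      X ∈ level S (n + 1) ∧ Y ∈ level S 1 ∧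
        Triangle.mk f g h ∈ distinguishedTriangles} Z}

section AuxLemmas

open ZeroObject Preadditive

theorem level_zero_eq (S : Set C) : level S 0 = {X : C | IsZero X} := by rw [level]

theorem level_one_eq (S : Set C) : level S 1 = {X : C | AddClos S X} := by rw [level]

theorem level_two_eq (S : Set C) (n : ℕ) :
    level S (n+2) = {Z | AddClos {W | ∃ (X Y : C) (f : X ⟶ Y) (g : Y ⟶ W)
      (h : W ⟶ X⟦(1 : ℤ)⟧), X ∈ level S (n + 1) ∧ Y ∈ level S 1 ∧
        Triangle.mk f g h ∈ distinguishedTriangles} Z} := by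
  conv_lhs => rw [level]

theorem mem_level0 {S : Set C} {X : C} : X ∈ level S 0 ↔ IsZero X := by
  rw [level_zero_eq]; exact Iff.rfl

theorem mem_level1 {S : Set C} {X : C} : X ∈ level S 1 ↔ AddClos S X := by
  rw [level_one_eq]; exact Iff.rfl

theorem mem_level2 {S : Set C} {n : ℕ} {Z : C} :
    Z ∈ level S (n+2) ↔ AddClos {W | ∃ (X Y : C) (f : X ⟶ Y) (g : Y ⟶ W)
      (h : W ⟶ X⟦(1 : ℤ)⟧), X ∈ level S (n + 1) ∧ Y ∈ level S 1 ∧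
        Triangle.mk f g h ∈ distinguishedTriangles} Z := by
  rw [level_two_eq]; exact Iff.rfl

/-- transfer of `AddClos` along a pointwise bound on the generators. -/
theorem addClos_trans {S T : Set C} (h : ∀ x ∈ T, AddClos S x) :
    ∀ {X : C}, AddClos T X → AddClos S X := by
  intro X hX
  induction hX with
  | of hx => exact h _ hx
  | zero hx => exact AddClos.zero hx
  | shift n _ ih => exact AddClos.shift n ih
  | sum _ _ ih1 ih2 => exact AddClos.sum ih1 ih2
  | retract _ i p hip ih => exact AddClos.retract ih i p hip

theorem addClos_isZero {T : Set C} (h : ∀ x ∈ T, IsZero x) :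
    ∀ {X : C}, AddClos T X → IsZero X := by
  intro X hX
  induction hX with
  | of hx => exact h _ hx
  | zero hx => exact hx
  | shift n _ ih => exact (shiftFunctor C n).map_isZero ih
  | sum _ _ ih1 ih2 => exact (biprod_isZero_iff _ _).2 ⟨ih1, ih2⟩
  | retract _ i p hip ih =>
      rw [IsZero.iff_id_eq_zero, ← hip, ih.eq_of_tgt i 0, zero_comp]

theorem zero_mem_level (S : Set C) (n : ℕ) {X : C} (hX : IsZero X) : X ∈ level S n := by
  match n with
  | 0 => exact mem_level0.2 hX
  | 1 => exact mem_level1.2 (AddClos.zero hX)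
  | (n+2) => exact mem_level2.2 (AddClos.zero hX)

theorem level_closed (S : Set C) (n : ℕ) {X : C} (hX : AddClos (level S n) X) :
    X ∈ level S n := by
  match n with
  | 0 => exact mem_level0.2 (addClos_isZero (fun x hx => mem_level0.1 hx) hX)
  | 1 => exact mem_level1.2 (addClos_trans (fun x hx => mem_level1.1 hx) hX)
  | (n+2) => exact mem_level2.2 (addClos_trans (fun x hx => mem_level2.1 hx) hX)

theorem level_shift {S : Set C} {n : ℕ} {X : C} (hX : X ∈ level S n) (k : ℤ) :
    X⟦k⟧ ∈ level S n :=
  level_closed S n (AddClos.shift k (AddClos.of hX))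

theorem level_sum {S : Set C} {n : ℕ} {X Y : C} (hX : X ∈ level S n) (hY : Y ∈ level S n) :
    (X ⊞ Y) ∈ level S n :=
  level_closed S n (AddClos.sum (AddClos.of hX) (AddClos.of hY))

theorem level_retract {S : Set C} {n : ℕ} {X Y : C} (hY : Y ∈ level S n)
    (i : X ⟶ Y) (p : Y ⟶ X) (hip : i ≫ p = 𝟙 X) : X ∈ level S n :=
  level_closed S n (AddClos.retract (AddClos.of hY) i p hip)

theorem level_iso {S : Set C} {n : ℕ} {X Y : C} (e : X ≅ Y) (hY : Y ∈ level S n) :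
    X ∈ level S n :=
  level_retract hY e.hom e.inv e.hom_inv_id

theorem level_le_succ (S : Set C) :
    ∀ (n : ℕ) {X : C}, X ∈ level S n → X ∈ level S (n+1) := by
  intro n
  induction n using Nat.strong_induction_on with
  | _ n IH =>
  match n with
  | 0 =>
      intro X hX
      exact mem_level1.2 (AddClos.zero (mem_level0.1 hX))
  | 1 =>
      intro X hX
      have h0 : (X⟦(-1:ℤ)⟧⟦(1:ℤ)⟧) ∈ level S 2 :=
        mem_level2.2 (AddClos.of ⟨X⟦(-1:ℤ)⟧, 0, 0, 0, 𝟙 _,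
          mem_level1.2 (AddClos.shift _ (mem_level1.1 hX)),
          mem_level1.2 (AddClos.zero (isZero_zero C)),
          contractible_distinguished₂ (X⟦(-1:ℤ)⟧)⟩)
      exact level_iso ((shiftFunctorCompIsoId C (-1:ℤ) (1:ℤ) (by ring)).app X).symm h0
  | (n+2) =>
      intro X hX
      refine mem_level2.2 (addClos_trans ?_ (mem_level2.1 hX))
      rintro W ⟨A, B, f, g, h, hA, hB, hT⟩
      exact AddClos.of ⟨A, B, f, g, h, IH (n+1) (by omega) hA, hB, hT⟩

theorem level_mono (S : Set C) {j k : ℕ} (hjk : j ≤ k) :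
    ∀ {X : C}, X ∈ level S j → X ∈ level S k := by
  induction hjk with
  | refl => intro X hX; exact hX
  | step _ ih => intro X hX; exact level_le_succ S _ (ih hX)

/-- clean version of TR3 -/
theorem complete' {X Y Z X' Y' Z' : C} {f : X ⟶ Y} {g : Y ⟶ Z} {h : Z ⟶ X⟦(1:ℤ)⟧}
    {f' : X' ⟶ Y'} {g' : Y' ⟶ Z'} {h' : Z' ⟶ X'⟦(1:ℤ)⟧}
    (hT : Triangle.mk f g h ∈ distTriang C) (hT' : Triangle.mk f' g' h' ∈ distTriang C)
    (a : X ⟶ X') (b : Y ⟶ Y') (comm : f ≫ b = a ≫ f') :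
    ∃ c : Z ⟶ Z', g ≫ c = b ≫ g' ∧ h ≫ a⟦(1:ℤ)⟧' = c ≫ h' := by
  obtain ⟨c, hc₁, hc₂⟩ := complete_distinguished_triangle_morphism _ _ hT hT' a b comm
  exact ⟨c, hc₁, hc₂⟩

/-- clean version of yoneda exactness at the middle object -/
theorem yoneda₂' {X Y Z : C} {f : X ⟶ Y} {g : Y ⟶ Z} {h : Z ⟶ X⟦(1:ℤ)⟧}
    (hT : Triangle.mk f g h ∈ distTriang C) {Q : C} (φ : Y ⟶ Q) (hφ : f ≫ φ = 0) :
    ∃ ψ : Z ⟶ Q, φ = g ≫ ψ :=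
  Triangle.yoneda_exact₂ _ hT φ hφ

/-- clean version of yoneda exactness at the third object -/
theorem yoneda₃' {X Y Z : C} {f : X ⟶ Y} {g : Y ⟶ Z} {h : Z ⟶ X⟦(1:ℤ)⟧}
    (hT : Triangle.mk f g h ∈ distTriang C) {Q : C} (φ : Z ⟶ Q) (hφ : g ≫ φ = 0) :
    ∃ ψ : X⟦(1:ℤ)⟧ ⟶ Q, φ = h ≫ ψ :=
  Triangle.yoneda_exact₃ _ hT φ hφ

theorem czero₁₂ {X Y Z : C} {f : X ⟶ Y} {g : Y ⟶ Z} {h : Z ⟶ X⟦(1:ℤ)⟧}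
    (hT : Triangle.mk f g h ∈ distTriang C) : f ≫ g = 0 :=
  comp_distTriang_mor_zero₁₂ _ hT

/-- If the middle term of a distinguished triangle is a retract of `Y'`, the cone is a retract
of the cone over the composed map to `Y'`. -/
theorem retract_of_retract_middle {X Y Y' W W' : C} {f : X ⟶ Y} {g : Y ⟶ W}
    {h : W ⟶ X⟦(1:ℤ)⟧} (hT : Triangle.mk f g h ∈ distTriang C)
    {i : Y ⟶ Y'} {p : Y' ⟶ Y} (hip : i ≫ p = 𝟙 Y)
    {g' : Y' ⟶ W'} {h' : W' ⟶ X⟦(1:ℤ)⟧}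
    (hT' : Triangle.mk (f ≫ i) g' h' ∈ distTriang C) :
    ∃ (iW : W ⟶ W') (pW : W' ⟶ W), iW ≫ pW = 𝟙 W := by
  obtain ⟨c₁, hc₁, hc₁'⟩ := complete' hT hT' (𝟙 X) i (by rw [Category.id_comp])
  obtain ⟨c₂, hc₂, hc₂'⟩ := complete' hT' hT (𝟙 X) p
    (by rw [Category.assoc, hip, Category.comp_id, Category.id_comp])
  simp only [CategoryTheory.Functor.map_id, Category.comp_id] at hc₁' hc₂'
  let φ : Triangle.mk f g h ⟶ Triangle.mk f g h :=
    { hom₁ := 𝟙 X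
      hom₂ := 𝟙 Y
      hom₃ := c₁ ≫ c₂
      comm₁ := by exact (Category.comp_id f).trans (Category.id_comp f).symm
      comm₂ := by
        show g ≫ (c₁ ≫ c₂) = 𝟙 Y ≫ g
        erw [Category.id_comp, ← Category.assoc, hc₁, Category.assoc, hc₂,
          ← Category.assoc, hip, Category.id_comp]
      comm₃ := by
        show h ≫ (𝟙 X)⟦(1:ℤ)⟧' = (c₁ ≫ c₂) ≫ h
        erw [CategoryTheory.Functor.map_id, Category.comp_id]
        erw [Category.assoc, ← hc₂', ← hc₁'] }
  have h3 : IsIso (c₁ ≫ c₂) :=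
    isIso₃_of_isIso₁₂ φ hT hT (IsIso.id X) (IsIso.id Y)
  exact ⟨c₁, c₂ ≫ inv (c₁ ≫ c₂), by rw [← Category.assoc, IsIso.hom_inv_id]⟩

/-- The direct sum of the cones of two distinguished triangles is a retract of a cone
on the direct sum of the first morphisms. -/
theorem biprod_retract_cone {X₁ Y₁ Z₁ X₂ Y₂ Z₂ : C}
    {f₁ : X₁ ⟶ Y₁} {g₁ : Y₁ ⟶ Z₁} {h₁ : Z₁ ⟶ X₁⟦(1:ℤ)⟧}
    (hT₁ : Triangle.mk f₁ g₁ h₁ ∈ distTriang C)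
    {f₂ : X₂ ⟶ Y₂} {g₂ : Y₂ ⟶ Z₂} {h₂ : Z₂ ⟶ X₂⟦(1:ℤ)⟧}
    (hT₂ : Triangle.mk f₂ g₂ h₂ ∈ distTriang C)
    {G : C} {gG : Y₁ ⊞ Y₂ ⟶ G} {hG : G ⟶ (X₁ ⊞ X₂)⟦(1:ℤ)⟧}
    (hTG : Triangle.mk (biprod.map f₁ f₂) gG hG ∈ distTriang C) :
    ∃ (iZ : Z₁ ⊞ Z₂ ⟶ G) (pZ : G ⟶ Z₁ ⊞ Z₂), iZ ≫ pZ = 𝟙 (Z₁ ⊞ Z₂) := by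
  obtain ⟨c₁, hc₁, hc₁'⟩ := complete' hTG hT₁ biprod.fst biprod.fst (by rw [biprod.map_fst])
  obtain ⟨c₂, hc₂, hc₂'⟩ := complete' hTG hT₂ biprod.snd biprod.snd (by rw [biprod.map_snd])
  obtain ⟨d₁, hd₁, hd₁'⟩ := complete' hT₁ hTG biprod.inl biprod.inl
    (by rw [biprod.inl_map])
  obtain ⟨d₂, hd₂, hd₂'⟩ := complete' hT₂ hTG biprod.inr biprod.inr
    (by rw [biprod.inr_map])
  have he₁ : g₁ ≫ (d₁ ≫ c₁ - 𝟙 Z₁) = 0 := by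
    rw [comp_sub, ← Category.assoc, hd₁, Category.assoc, hc₁, ← Category.assoc,
      biprod.inl_fst, Category.id_comp, Category.comp_id, sub_self]
  have he₂ : g₂ ≫ (d₂ ≫ c₂ - 𝟙 Z₂) = 0 := by
    rw [comp_sub, ← Category.assoc, hd₂, Category.assoc, hc₂, ← Category.assoc,
      biprod.inr_snd, Category.id_comp, Category.comp_id, sub_self]
  have hn₁₂ : g₁ ≫ (d₁ ≫ c₂) = 0 := by
    rw [← Category.assoc, hd₁, Category.assoc, hc₂, ← Category.assoc,
      biprod.inl_snd, zero_comp]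
  have hn₂₁ : g₂ ≫ (d₂ ≫ c₁) = 0 := by
    rw [← Category.assoc, hd₂, Category.assoc, hc₁, ← Category.assoc,
      biprod.inr_fst, zero_comp]
  obtain ⟨ε₁, hε₁⟩ := yoneda₃' hT₁ _ he₁
  obtain ⟨ε₂, hε₂⟩ := yoneda₃' hT₂ _ he₂
  obtain ⟨ξ₁₂, hξ₁₂⟩ := yoneda₃' hT₁ _ hn₁₂
  obtain ⟨ξ₂₁, hξ₂₁⟩ := yoneda₃' hT₂ _ hn₂₁
  have hr₁ : (d₁ ≫ c₁ - 𝟙 Z₁) ≫ h₁ = 0 := by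
    rw [sub_comp, Category.assoc, ← hc₁', ← Category.assoc, ← hd₁',
      Category.assoc, ← CategoryTheory.Functor.map_comp, biprod.inl_fst, CategoryTheory.Functor.map_id,
      Category.comp_id, Category.id_comp, sub_self]
  have hr₂ : (d₂ ≫ c₂ - 𝟙 Z₂) ≫ h₂ = 0 := by
    rw [sub_comp, Category.assoc, ← hc₂', ← Category.assoc, ← hd₂',
      Category.assoc, ← CategoryTheory.Functor.map_comp, biprod.inr_snd, CategoryTheory.Functor.map_id,
      Category.comp_id, Category.id_comp, sub_self]
  have hr₁₂ : (d₁ ≫ c₂) ≫ h₂ = 0 := by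
    rw [Category.assoc, ← hc₂', ← Category.assoc, ← hd₁', Category.assoc,
      ← CategoryTheory.Functor.map_comp, biprod.inl_snd, CategoryTheory.Functor.map_zero, comp_zero]
  have hr₂₁ : (d₂ ≫ c₁) ≫ h₁ = 0 := by
    rw [Category.assoc, ← hc₁', ← Category.assoc, ← hd₂', Category.assoc,
      ← CategoryTheory.Functor.map_comp, biprod.inr_fst, CategoryTheory.Functor.map_zero, comp_zero]
  have hBA : biprod.desc d₁ d₂ ≫ biprod.lift c₁ c₂ = 𝟙 (Z₁ ⊞ Z₂) +
      biprod.desc (h₁ ≫ biprod.lift ε₁ ξ₁₂) (h₂ ≫ biprod.lift ξ₂₁ ε₂) := by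
    apply biprod.hom_ext'
    · apply biprod.hom_ext
      · simp only [Category.assoc, Preadditive.comp_add, Preadditive.add_comp,
          biprod.inl_desc, biprod.inr_desc, biprod.inl_desc_assoc, biprod.inr_desc_assoc,
          biprod.lift_fst, biprod.lift_snd, biprod.inl_fst, biprod.inl_snd,
          biprod.inr_fst, biprod.inr_snd, Category.comp_id, Category.id_comp,
          zero_add, add_zero, comp_zero, zero_comp]
        rw [← hε₁]; abel
      · simp only [Category.assoc, Preadditive.comp_add, Preadditive.add_comp,
          biprod.inl_desc, biprod.inr_desc, biprod.inl_desc_assoc, biprod.inr_desc_assoc,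
          biprod.lift_fst, biprod.lift_snd, biprod.inl_fst, biprod.inl_snd,
          biprod.inr_fst, biprod.inr_snd, Category.comp_id, Category.id_comp,
          zero_add, add_zero, comp_zero, zero_comp]
        rw [← hξ₁₂]
    · apply biprod.hom_ext
      · simp only [Category.assoc, Preadditive.comp_add, Preadditive.add_comp,
          biprod.inl_desc, biprod.inr_desc, biprod.inl_desc_assoc, biprod.inr_desc_assoc,
          biprod.lift_fst, biprod.lift_snd, biprod.inl_fst, biprod.inl_snd,
          biprod.inr_fst, biprod.inr_snd, Category.comp_id, Category.id_comp,
          zero_add, add_zero, comp_zero, zero_comp]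
        rw [← hξ₂₁]
      · simp only [Category.assoc, Preadditive.comp_add, Preadditive.add_comp,
          biprod.inl_desc, biprod.inr_desc, biprod.inl_desc_assoc, biprod.inr_desc_assoc,
          biprod.lift_fst, biprod.lift_snd, biprod.inl_fst, biprod.inl_snd,
          biprod.inr_fst, biprod.inr_snd, Category.comp_id, Category.id_comp,
          zero_add, add_zero, comp_zero, zero_comp]
        rw [← hε₂]; abel
  have t11 : h₁ ≫ ε₁ ≫ h₁ ≫ biprod.lift ε₁ ξ₁₂ = 0 := by
    rw [← Category.assoc, ← Category.assoc, ← hε₁, hr₁, zero_comp]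
  have t12 : h₁ ≫ ξ₁₂ ≫ h₂ ≫ biprod.lift ξ₂₁ ε₂ = 0 := by
    rw [← Category.assoc, ← Category.assoc, ← hξ₁₂, hr₁₂, zero_comp]
  have t21 : h₂ ≫ ξ₂₁ ≫ h₁ ≫ biprod.lift ε₁ ξ₁₂ = 0 := by
    rw [← Category.assoc, ← Category.assoc, ← hξ₂₁, hr₂₁, zero_comp]
  have t22 : h₂ ≫ ε₂ ≫ h₂ ≫ biprod.lift ξ₂₁ ε₂ = 0 := by
    rw [← Category.assoc, ← Category.assoc, ← hε₂, hr₂, zero_comp]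
  have key₁ : (h₁ ≫ biprod.lift ε₁ ξ₁₂) ≫
      biprod.desc (h₁ ≫ biprod.lift ε₁ ξ₁₂) (h₂ ≫ biprod.lift ξ₂₁ ε₂) = 0 := by
    rw [Category.assoc, biprod.lift_desc, comp_add, t11, t12, add_zero]
  have key₂ : (h₂ ≫ biprod.lift ξ₂₁ ε₂) ≫
      biprod.desc (h₁ ≫ biprod.lift ε₁ ξ₁₂) (h₂ ≫ biprod.lift ξ₂₁ ε₂) = 0 := by
    rw [Category.assoc, biprod.lift_desc, comp_add, t21, t22, add_zero]
  have hNN : biprod.desc (h₁ ≫ biprod.lift ε₁ ξ₁₂) (h₂ ≫ biprod.lift ξ₂₁ ε₂) ≫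
      biprod.desc (h₁ ≫ biprod.lift ε₁ ξ₁₂) (h₂ ≫ biprod.lift ξ₂₁ ε₂) = 0 := by
    apply biprod.hom_ext'
    · rw [← Category.assoc, biprod.inl_desc, key₁, comp_zero]
    · rw [← Category.assoc, biprod.inr_desc, key₂, comp_zero]
  refine ⟨biprod.desc d₁ d₂, biprod.lift c₁ c₂ ≫ (𝟙 (Z₁ ⊞ Z₂) -
    biprod.desc (h₁ ≫ biprod.lift ε₁ ξ₁₂) (h₂ ≫ biprod.lift ξ₂₁ ε₂)), ?_⟩
  rw [← Category.assoc, hBA, add_comp, Category.id_comp, comp_sub, Category.comp_id, hNN]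
  abel

/-- Weak octahedron (TR1–TR3 only): the cone `Wo` of a composite `u ≫ v` is a retract of
`Do ⊞ Vo ⊞ Xo⟦1⟧` where `Do` is a cone on an explicit morphism `Vo⟦-1⟧ ⟶ Uo`. -/
theorem cone_comp_retract {Xo Yo Zo Uo Vo Wo : C}
    {u : Xo ⟶ Yo} {a : Yo ⟶ Uo} {a' : Uo ⟶ Xo⟦(1:ℤ)⟧}
    (hTu : Triangle.mk u a a' ∈ distTriang C)
    {v : Yo ⟶ Zo} {bm : Zo ⟶ Vo} {b' : Vo ⟶ Yo⟦(1:ℤ)⟧}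
    (hTv : Triangle.mk v bm b' ∈ distTriang C)
    {c : Zo ⟶ Wo} {c' : Wo ⟶ Xo⟦(1:ℤ)⟧}
    (hTw : Triangle.mk (u ≫ v) c c' ∈ distTriang C)
    {Do : C} {j : Uo ⟶ Do} {k : Do ⟶ ((Vo⟦(-1:ℤ)⟧)⟦(1:ℤ)⟧)}
    (hTD : Triangle.mk ((Triangle.mk v bm b').invRotate.mor₁ ≫ a) j k ∈ distTriang C) :
    ∃ (i : Wo ⟶ (Do ⊞ Vo) ⊞ Xo⟦(1:ℤ)⟧) (r : ((Do ⊞ Vo) ⊞ Xo⟦(1:ℤ)⟧) ⟶ Wo),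
      i ≫ r = 𝟙 Wo := by
  have hTvr : Triangle.mk ((Triangle.mk v bm b').invRotate.mor₁) v
      (bm ≫ (shiftEquiv C (1 : ℤ)).counitIso.inv.app Vo) ∈ distTriang C :=
    inv_rot_of_distTriang _ hTv
  set sv : (Vo⟦(-1:ℤ)⟧) ⟶ Yo := (Triangle.mk v bm b').invRotate.mor₁ with hsvdef
  have hsv : sv ≫ v = 0 := czero₁₂ hTvr
  have hua : u ≫ a = 0 := czero₁₂ hTu
  have hsaj : sv ≫ (a ≫ j) = 0 := by
    rw [← Category.assoc]
    exact czero₁₂ hTD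
  obtain ⟨ρ, hρ, -⟩ := complete' hTu hTw (𝟙 Xo) v (by rw [Category.id_comp])
  obtain ⟨β, hβ, -⟩ := complete' hTw hTv u (𝟙 Zo) (by rw [Category.comp_id])
  rw [Category.id_comp] at hβ
  obtain ⟨ψ, hψ⟩ := yoneda₂' hTvr (-(a ≫ j)) (by erw [comp_neg, hsaj, neg_zero])
  obtain ⟨i₀, hi₀⟩ := yoneda₂' hTw ψ (by
    erw [Category.assoc, ← hψ, comp_neg, ← Category.assoc, hua, zero_comp, neg_zero])
  obtain ⟨r₀, hr₀⟩ := yoneda₂' hTD ρ (by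
    erw [Category.assoc, hρ, ← Category.assoc, hsv, zero_comp])
  obtain ⟨τ, hτ⟩ := yoneda₂' hTv (ψ ≫ r₀ + c) (by
    erw [comp_add, ← Category.assoc, ← hψ, neg_comp, Category.assoc, ← hr₀, hρ]
    abel)
  obtain ⟨ε, hε⟩ := yoneda₃' hTw (𝟙 Wo + i₀ ≫ r₀ - β ≫ τ) (by
    rw [comp_sub, comp_add, Category.comp_id, ← Category.assoc, ← hi₀,
      ← Category.assoc, hβ, ← hτ]
    abel)
  refine ⟨biprod.lift (biprod.lift i₀ β) c', biprod.desc (biprod.desc (-r₀) τ) ε, ?_⟩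
  rw [biprod.lift_desc, biprod.lift_desc, ← hε, comp_neg]
  abel

/-- Normal form: every element of `level S (n+2)` is a retract of an honest cone. -/
theorem level_nf (S : Set C) (n : ℕ) :
    ∀ {Z : C}, Z ∈ level S (n+2) →
      ∃ (W A B : C) (f : A ⟶ B) (g : B ⟶ W) (h : W ⟶ A⟦(1:ℤ)⟧) (iZ : Z ⟶ W) (pZ : W ⟶ Z),
        iZ ≫ pZ = 𝟙 Z ∧ A ∈ level S (n+1) ∧ B ∈ level S 1 ∧
          Triangle.mk f g h ∈ distTriang C := by
  have shift1 : ∀ {Z : C},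
      (∃ (W A B : C) (f : A ⟶ B) (g : B ⟶ W) (h : W ⟶ A⟦(1:ℤ)⟧) (iZ : Z ⟶ W) (pZ : W ⟶ Z),
        iZ ≫ pZ = 𝟙 Z ∧ A ∈ level S (n+1) ∧ B ∈ level S 1 ∧
          Triangle.mk f g h ∈ distTriang C) →
      (∃ (W A B : C) (f : A ⟶ B) (g : B ⟶ W) (h : W ⟶ A⟦(1:ℤ)⟧)
          (iZ : Z⟦(1:ℤ)⟧ ⟶ W) (pZ : W ⟶ Z⟦(1:ℤ)⟧),
        iZ ≫ pZ = 𝟙 (Z⟦(1:ℤ)⟧) ∧ A ∈ level S (n+1) ∧ B ∈ level S 1 ∧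
          Triangle.mk f g h ∈ distTriang C) := by
    rintro Z ⟨W, A, B, f, g, h, iZ, pZ, hip, hA, hB, hT⟩
    refine ⟨W⟦(1:ℤ)⟧, A⟦(1:ℤ)⟧, B⟦(1:ℤ)⟧,
      ((Triangle.mk f g h).rotate.rotate.rotate).mor₁,
      ((Triangle.mk f g h).rotate.rotate.rotate).mor₂,
      ((Triangle.mk f g h).rotate.rotate.rotate).mor₃,
      iZ⟦(1:ℤ)⟧', pZ⟦(1:ℤ)⟧', ?_, level_shift hA 1, level_shift hB 1, ?_⟩
    · rw [← CategoryTheory.Functor.map_comp, hip, CategoryTheory.Functor.map_id]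
    · exact rot_of_distTriang _ (rot_of_distTriang _ (rot_of_distTriang _ hT))
  have shiftneg1 : ∀ {Z : C},
      (∃ (W A B : C) (f : A ⟶ B) (g : B ⟶ W) (h : W ⟶ A⟦(1:ℤ)⟧) (iZ : Z ⟶ W) (pZ : W ⟶ Z),
        iZ ≫ pZ = 𝟙 Z ∧ A ∈ level S (n+1) ∧ B ∈ level S 1 ∧
          Triangle.mk f g h ∈ distTriang C) →
      (∃ (W A B : C) (f : A ⟶ B) (g : B ⟶ W) (h : W ⟶ A⟦(1:ℤ)⟧)
          (iZ : Z⟦(-1:ℤ)⟧ ⟶ W) (pZ : W ⟶ Z⟦(-1:ℤ)⟧),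
        iZ ≫ pZ = 𝟙 (Z⟦(-1:ℤ)⟧) ∧ A ∈ level S (n+1) ∧ B ∈ level S 1 ∧
          Triangle.mk f g h ∈ distTriang C) := by
    rintro Z ⟨W, A, B, f, g, h, iZ, pZ, hip, hA, hB, hT⟩
    refine ⟨W⟦(-1:ℤ)⟧, A⟦(-1:ℤ)⟧, B⟦(-1:ℤ)⟧,
      ((Triangle.mk f g h).invRotate.invRotate.invRotate).mor₁,
      ((Triangle.mk f g h).invRotate.invRotate.invRotate).mor₂,
      ((Triangle.mk f g h).invRotate.invRotate.invRotate).mor₃,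
      iZ⟦(-1:ℤ)⟧', pZ⟦(-1:ℤ)⟧', ?_, level_shift hA (-1), level_shift hB (-1), ?_⟩
    · rw [← CategoryTheory.Functor.map_comp, hip, CategoryTheory.Functor.map_id]
    · exact inv_rot_of_distTriang _ (inv_rot_of_distTriang _ (inv_rot_of_distTriang _ hT))
  have isoP : ∀ {Z Z' : C}, (Z ≅ Z') →
      (∃ (W A B : C) (f : A ⟶ B) (g : B ⟶ W) (h : W ⟶ A⟦(1:ℤ)⟧) (iZ : Z' ⟶ W) (pZ : W ⟶ Z'),
        iZ ≫ pZ = 𝟙 Z' ∧ A ∈ level S (n+1) ∧ B ∈ level S 1 ∧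
          Triangle.mk f g h ∈ distTriang C) →
      (∃ (W A B : C) (f : A ⟶ B) (g : B ⟶ W) (h : W ⟶ A⟦(1:ℤ)⟧) (iZ : Z ⟶ W) (pZ : W ⟶ Z),
        iZ ≫ pZ = 𝟙 Z ∧ A ∈ level S (n+1) ∧ B ∈ level S 1 ∧
          Triangle.mk f g h ∈ distTriang C) := by
    rintro Z Z' e ⟨W, A, B, f, g, h, iZ, pZ, hip, hA, hB, hT⟩
    refine ⟨W, A, B, f, g, h, e.hom ≫ iZ, pZ ≫ e.inv, ?_, hA, hB, hT⟩
    rw [Category.assoc, ← Category.assoc iZ, hip, Category.id_comp, e.hom_inv_id]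
  have shiftP : ∀ (k : ℤ) {Z : C},
      (∃ (W A B : C) (f : A ⟶ B) (g : B ⟶ W) (h : W ⟶ A⟦(1:ℤ)⟧) (iZ : Z ⟶ W) (pZ : W ⟶ Z),
        iZ ≫ pZ = 𝟙 Z ∧ A ∈ level S (n+1) ∧ B ∈ level S 1 ∧
          Triangle.mk f g h ∈ distTriang C) →
      (∃ (W A B : C) (f : A ⟶ B) (g : B ⟶ W) (h : W ⟶ A⟦(1:ℤ)⟧)
          (iZ : Z⟦k⟧ ⟶ W) (pZ : W ⟶ Z⟦k⟧),
        iZ ≫ pZ = 𝟙 (Z⟦k⟧) ∧ A ∈ level S (n+1) ∧ B ∈ level S 1 ∧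
          Triangle.mk f g h ∈ distTriang C) := by
    intro k
    induction k using Int.induction_on with
    | zero => exact fun {Z} hZ => isoP ((shiftFunctorZero C ℤ).app Z) hZ
    | succ i ih =>
        exact fun {Z} hZ =>
          isoP ((shiftFunctorAdd' C (i : ℤ) 1 ((i : ℤ) + 1) rfl).app Z) (shift1 (ih hZ))
    | pred i ih =>
        exact fun {Z} hZ =>
          isoP ((shiftFunctorAdd' C (-(i : ℤ)) (-1) (-(i : ℤ) - 1) (by ring)).app Z)
            (shiftneg1 (ih hZ))
  intro Z hZ
  have hZ' := mem_level2.1 hZ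
  clear hZ
  induction hZ' with
  | of hx =>
      obtain ⟨A, B, f, g, h, hA, hB, hT⟩ := hx
      exact ⟨_, A, B, f, g, h, 𝟙 _, 𝟙 _, by simp, hA, hB, hT⟩
  | zero hx =>
      refine ⟨0, 0, 0, 𝟙 (0 : C), 0, 0, 0, 0, ?_, zero_mem_level S (n+1) (isZero_zero C),
        mem_level1.2 (AddClos.zero (isZero_zero C)), contractible_distinguished (0 : C)⟩
      exact hx.eq_of_src _ _
  | shift k _ ih => exact shiftP k ih
  | sum _ _ ih1 ih2 =>
      obtain ⟨W₁, A₁, B₁, f₁, g₁, h₁, i₁, p₁, hip₁, hA₁, hB₁, hT₁⟩ := ih1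
      obtain ⟨W₂, A₂, B₂, f₂, g₂, h₂, i₂, p₂, hip₂, hA₂, hB₂, hT₂⟩ := ih2
      obtain ⟨G, gG, hG, hTG⟩ := distinguished_cocone_triangle (biprod.map f₁ f₂)
      obtain ⟨iZG, pZG, hZG⟩ := biprod_retract_cone hT₁ hT₂ hTG
      have hmap : biprod.map i₁ i₂ ≫ biprod.map p₁ p₂ = 𝟙 _ := by
        apply biprod.hom_ext'
        · rw [← Category.assoc, biprod.inl_map, Category.assoc, biprod.inl_map,
            ← Category.assoc, hip₁, Category.id_comp, Category.comp_id]
        · rw [← Category.assoc, biprod.inr_map, Category.assoc, biprod.inr_map,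
            ← Category.assoc, hip₂, Category.id_comp, Category.comp_id]
      refine ⟨G, A₁ ⊞ A₂, B₁ ⊞ B₂, biprod.map f₁ f₂, gG, hG,
        biprod.map i₁ i₂ ≫ iZG, pZG ≫ biprod.map p₁ p₂, ?_,
        level_sum hA₁ hA₂, mem_level1.2 (AddClos.sum (mem_level1.1 hB₁) (mem_level1.1 hB₂)),
        hTG⟩
      rw [Category.assoc, ← Category.assoc iZG, hZG, Category.id_comp, hmap]
  | retract _ i p hip ih =>
      obtain ⟨W, A, B, f, g, h, iZ, pZ, hip', hA, hB, hT⟩ := ih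
      refine ⟨W, A, B, f, g, h, i ≫ iZ, pZ ≫ p, ?_, hA, hB, hT⟩
      rw [Category.assoc, ← Category.assoc iZ, hip', Category.id_comp, hip]

/-- Key lemma: cones add levels. -/
theorem level_cone (S : Set C) :
    ∀ (b : ℕ) (a : ℕ) {X Y W : C} (f : X ⟶ Y) (g : Y ⟶ W) (h : W ⟶ X⟦(1:ℤ)⟧),
      Triangle.mk f g h ∈ (distTriang C) → X ∈ level S a → Y ∈ level S b →
        W ∈ level S (a + b) := by
  intro b
  induction b using Nat.strong_induction_on with
  | _ b IH =>
  match b with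
  | 0 =>
      intro a X Y W f g h hT hX hY
      have : IsIso h := (Triangle.isZero₂_iff_isIso₃ _ hT).1 (mem_level0.1 hY)
      exact level_iso (asIso h) (level_shift hX 1)
  | 1 =>
      intro a X Y W f g h hT hX hY
      match a with
      | 0 =>
          have : IsIso g := (Triangle.isZero₁_iff_isIso₂ _ hT).1 (mem_level0.1 hX)
          exact level_iso (asIso g).symm hY
      | (a'+1) =>
          exact mem_level2.2 (AddClos.of ⟨X, Y, f, g, h, hX, hY, hT⟩)
  | (n+2) =>
      intro a X Y W f g h hT hX hY
      obtain ⟨Y', A, B, pp, qq, rr, iY, pY, hipY, hA, hB, hTY'⟩ := level_nf S n hY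
      obtain ⟨W'', g'', h'', hT''⟩ := distinguished_cocone_triangle (f ≫ iY)
      obtain ⟨iW, pW, hipW⟩ := retract_of_retract_middle hT hipY hT''
      have hTu : Triangle.mk qq rr (-(pp⟦(1:ℤ)⟧')) ∈ distTriang C :=
        rot_of_distTriang _ hTY'
      have hTv : Triangle.mk g'' h'' (-((f ≫ iY)⟦(1:ℤ)⟧')) ∈ distTriang C :=
        rot_of_distTriang _ hT''
      obtain ⟨Wstar, c, c', hTws⟩ := distinguished_cocone_triangle (qq ≫ g'')
      obtain ⟨Dobj, j, k, hTD⟩ := distinguished_cocone_triangle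
        ((Triangle.mk g'' h'' (-((f ≫ iY)⟦(1:ℤ)⟧'))).invRotate.mor₁ ≫ rr)
      have hD : Dobj ∈ level S (a + (n+1)) :=
        IH (n+1) (by omega) a _ _ _ hTD (level_shift (level_shift hX 1) (-1))
          (level_shift hA 1)
      obtain ⟨iS, rS, hS⟩ := cone_comp_retract hTu hTv hTws hTD
      have hXs : (X⟦(1:ℤ)⟧) ∈ level S (a + (n+1)) :=
        level_mono S (by omega) (level_shift hX 1)
      have hBs : (B⟦(1:ℤ)⟧) ∈ level S (a + (n+1)) :=
        level_mono S (by omega) (level_shift hB 1)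
      have hbig : ((Dobj ⊞ X⟦(1:ℤ)⟧) ⊞ B⟦(1:ℤ)⟧) ∈ level S (a + (n+1)) :=
        level_sum (level_sum hD hXs) hBs
      have hWstar : Wstar ∈ level S (a + (n+1)) := level_retract hbig iS rS hS
      have hW'' : W'' ∈ level S ((a + n) + 2) := by
        refine mem_level2.2 (AddClos.of ⟨Wstar⟦(-1:ℤ)⟧, B,
          ((Triangle.mk (qq ≫ g'') c c').invRotate).mor₁,
          ((Triangle.mk (qq ≫ g'') c c').invRotate).mor₂,
          ((Triangle.mk (qq ≫ g'') c c').invRotate).mor₃,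
          level_shift hWstar (-1), hB, ?_⟩)
        exact inv_rot_of_distTriang _ hTws
      exact level_retract hW'' iW pW hipW

/-- Replacing generators: if every generator of `T` lies in `level S k` then
`level T n ⊆ level S (k*n)`. -/
theorem level_gen (S T : Set C) (k : ℕ) (hT : ∀ x ∈ T, x ∈ level S k) :
    ∀ (n : ℕ) {F : C}, F ∈ level T n → F ∈ level S (k * n) := by
  intro n
  induction n using Nat.strong_induction_on with
  | _ n IH =>
  match n with
  | 0 =>
      intro F hF
      exact zero_mem_level S (k * 0) (mem_level0.1 hF)
  | 1 =>
      intro F hF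
      rw [mul_one]
      exact level_closed S k
        (addClos_trans (fun x hx => AddClos.of (hT x hx)) (mem_level1.1 hF))
  | (n+2) =>
      intro F hF
      have harith : k * (n+1) + k = k * (n+2) := by ring
      refine level_closed S (k * (n+2)) (addClos_trans ?_ (mem_level2.1 hF))
      rintro w ⟨X, Y, f, g, h, hX, hY, hTr⟩
      refine AddClos.of ?_
      have hX' : X ∈ level S (k * (n+1)) := IH (n+1) (by omega) hX
      have hY' : Y ∈ level S k := by
        have := IH 1 (by omega) hY
        rwa [mul_one] at this
      have := level_cone S k (k * (n+1)) f g h hTr hX' hY'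
      exact harith ▸ this

end AuxLemmas

/-- submultiplicativity of level: if `E ∈ ⟨S⟩_m` and `F ∈ ⟨E⟩_n`
then `F ∈ ⟨S⟩_{m·n}`. -/
theorem level_submultiplicative (S : Set C) (E F : C) (m n : ℕ)
    (hE : E ∈ level S m) (hF : F ∈ level ({E} : Set C) n) :
    F ∈ level S (m * n) := by
  exact level_gen S ({E} : Set C) m (fun x hx => by rwa [Set.mem_singleton_iff.1 hx]) n hF
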